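/- arXiv:2309.13757 — 3 statements merged into one kernel-verified Lean document; each statement's English description precedes it below -/
import Mathlib

section
/- If H is a cyclic group and φ, ψ : H → D are surjective group homomorphisms onto a group D, then the fibre product H ×_D H = {(h,h') : φ(h) = ψ(h')} contains a subgroup isomorphic to H. -/
/-- The fibre product `H ×_D H'` of two group homomorphisms `φ : H → D`, `ψ : H' → D`,
as a subgroup of `H × H'`. -/
def fiberProduct {H H' D : Type*} [Group H] [Group H'] [Group D]
    (φ : H →* D) (ψ : H' →* D) : Subgroup (H × H') where
  carrier := {p | φ p.1 = ψ p.2}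
  one_mem' := by simp
  mul_mem' := by
    intro a b ha hb
    simp only [Set.mem_setOf_eq, Prod.fst_mul, Prod.snd_mul, map_mul] at *
    rw [ha, hb]
  inv_mem' := by
    intro a ha
    simp only [Set.mem_setOf_eq, Prod.fst_inv, Prod.snd_inv, map_inv] at *
    rw [ha]


/-- If `H` is a cyclic group and `φ, ψ : H → D` are surjective homomorphisms, then the fibre
product `H ×_D H` contains a subgroup isomorphic to `H`. -/
theorem stmt_3 {H D : Type*} [Group H] [Group D] [IsCyclic H]
    (φ ψ : H →* D) (hφ : Function.Surjective φ) (hψ : Function.Surjective ψ) :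
    ∃ K : Subgroup (fiberProduct φ ψ), Nonempty (K ≃* H) := by
  obtain ⟨x, hx⟩ := IsCyclic.exists_generator (α := H)
  obtain ⟨y, hy⟩ := hψ (φ x)
  have hdvd : orderOf y ∣ orderOf x := by
    obtain ⟨k, hk⟩ := Subgroup.mem_zpowers_iff.mp (hx y)
    apply orderOf_dvd_of_pow_eq_one
    rw [← hk, ← zpow_natCast, ← zpow_mul, mul_comm, zpow_mul, zpow_natCast, pow_orderOf_eq_one,
      one_zpow]
  let g : H →* H := monoidHomOfForallMemZpowers hx hdvd
  have hgen : g x = y := monoidHomOfForallMemZpowers_apply_gen hx hdvd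
  have key : ∀ h : H, φ h = ψ (g h) := by
    intro h
    obtain ⟨k, hk⟩ := Subgroup.mem_zpowers_iff.mp (hx h)
    rw [← hk, map_zpow, map_zpow, map_zpow, hgen, hy]
  let f : H →* fiberProduct φ ψ :=
    ((MonoidHom.id H).prod g).codRestrict (fiberProduct φ ψ) (fun h => key h)
  have hf : Function.Injective f := by
    intro a b hab
    have := congrArg (fun z : fiberProduct φ ψ => (z : H × H).1) hab
    exact this
  exact ⟨f.range, ⟨(MonoidHom.ofInjective hf).symm⟩⟩
end

section
/- Let H be the dihedral group D₄ = ⟨a, b | a⁴ = b² = (ab)² = 1⟩, D = Z₂ × Z₂, and define surjective homomorphisms φ, ψ : H → D by φ(a) = (0,1), φ(b) = (1,0), ψ(a) = (1,0), ψ(b) = (1,1). Then the fibre product H ×_D H = {(h,h') : φ(h) = ψ(h')} contains no subgroup isomorphic to D₄. -/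
open DihedralGroup Multiplicative

/-- Auxiliary: the explicit map `φ`. -/
def phi0fun : DihedralGroup 4 → Multiplicative (ZMod 2 × ZMod 2)
  | .r i => ofAdd (0, (i.val : ZMod 2))
  | .sr i => ofAdd (1, (i.val : ZMod 2))

/-- Auxiliary: the explicit map `ψ`. -/
def psi0fun : DihedralGroup 4 → Multiplicative (ZMod 2 × ZMod 2)
  | .r i => ofAdd ((i.val : ZMod 2), 0)
  | .sr i => ofAdd (1 + (i.val : ZMod 2), 1)

/-- Auxiliary: the explicit hom `φ`. -/
def phi0 : DihedralGroup 4 →* Multiplicative (ZMod 2 × ZMod 2) where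
  toFun := phi0fun
  map_one' := by decide
  map_mul' := by decide

/-- Auxiliary: the explicit hom `ψ`. -/
def psi0 : DihedralGroup 4 →* Multiplicative (ZMod 2 × ZMod 2) where
  toFun := psi0fun
  map_one' := by decide
  map_mul' := by decide

set_option maxRecDepth 20000 in
/-- The key finite check: in the fibre product there is no pair `(x, y)` with
`x` of order `4` and `y` conjugating `x` to `x⁻¹`. -/
lemma key : ∀ x y : DihedralGroup 4 × DihedralGroup 4,
    phi0 x.1 = psi0 x.2 → phi0 y.1 = psi0 y.2 →
    (x * x = 1 ∨ y * x * y⁻¹ ≠ x⁻¹) := by decide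

/-- A hom out of `D₄` is determined by its values on `r 1` and `sr 0`. -/
lemma hom_eq (χ χ0 : DihedralGroup 4 →* Multiplicative (ZMod 2 × ZMod 2))
    (h1 : χ (DihedralGroup.r 1) = χ0 (DihedralGroup.r 1))
    (h2 : χ (DihedralGroup.sr 0) = χ0 (DihedralGroup.sr 0)) : χ = χ0 := by
  refine MonoidHom.ext fun x => ?_
  match x with
  | .r i =>
    have hr : (DihedralGroup.r i : DihedralGroup 4) = DihedralGroup.r 1 ^ i.val := by
      rw [r_one_pow, ZMod.natCast_val, ZMod.cast_id]
    rw [hr, map_pow, map_pow, h1]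
  | .sr i =>
    have hs : (DihedralGroup.sr i : DihedralGroup 4)
        = DihedralGroup.sr 0 * DihedralGroup.r 1 ^ i.val := by
      rw [r_one_pow, ZMod.natCast_val, ZMod.cast_id, sr_mul_r, zero_add]
    rw [hs, map_mul, map_mul, map_pow, map_pow, h1, h2]

/-- For `H = D₄ = ⟨a,b | a⁴ = b² = (ab)² = 1⟩` (with `a = r 1`, `b = sr 0`),
`D = Z₂ × Z₂`, and the surjective homomorphisms `φ, ψ : H → D` determined by
`φ(a) = (0,1)`, `φ(b) = (1,0)`, `ψ(a) = (1,0)`, `ψ(b) = (1,1)`, the fibre product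
`H ×_D H` contains no subgroup isomorphic to `D₄`. -/
theorem stmt_4 (φ ψ : DihedralGroup 4 →* Multiplicative (ZMod 2 × ZMod 2))
    (hφ : Function.Surjective φ) (hψ : Function.Surjective ψ)
    (hφa : φ (DihedralGroup.r 1) = Multiplicative.ofAdd (0, 1))
    (hφb : φ (DihedralGroup.sr 0) = Multiplicative.ofAdd (1, 0))
    (hψa : ψ (DihedralGroup.r 1) = Multiplicative.ofAdd (1, 0))
    (hψb : ψ (DihedralGroup.sr 0) = Multiplicative.ofAdd (1, 1)) :
    ¬ ∃ K : Subgroup (fiberProduct φ ψ), Nonempty (K ≃* DihedralGroup 4) := by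
  have hφ0 : φ = phi0 := hom_eq φ phi0 (by rw [hφa]; decide) (by rw [hφb]; decide)
  have hψ0 : ψ = psi0 := hom_eq ψ psi0 (by rw [hψa]; decide) (by rw [hψb]; decide)
  subst hφ0 hψ0
  rintro ⟨K, ⟨e⟩⟩
  set u := e.symm (DihedralGroup.r 1) with hu
  set v := e.symm (DihedralGroup.sr 0) with hv
  have huu : u * u ≠ 1 := by
    intro h
    have h' := congrArg e h
    rw [map_mul, map_one, hu, MulEquiv.apply_symm_apply] at h'
    exact absurd h' (by decide)
  have hvc : v * u * v⁻¹ = u⁻¹ := by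
    apply e.injective
    rw [map_mul, map_mul, map_inv, map_inv, hu, hv, MulEquiv.apply_symm_apply,
      MulEquiv.apply_symm_apply]
    decide
  have hum : phi0 (↑↑u : DihedralGroup 4 × DihedralGroup 4).1
      = psi0 (↑↑u : DihedralGroup 4 × DihedralGroup 4).2 := u.1.2
  have hvm : phi0 (↑↑v : DihedralGroup 4 × DihedralGroup 4).1
      = psi0 (↑↑v : DihedralGroup 4 × DihedralGroup 4).2 := v.1.2
  rcases key (↑↑u) (↑↑v) hum hvm with h | h
  · exact huu (by exact_mod_cast h)
  · exact h (by exact_mod_cast congrArg (fun z : K => ((z : fiberProduct phi0 psi0) :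
      DihedralGroup 4 × DihedralGroup 4)) hvc)
end

section
/- If G' is a group with a central subgroup Z ≅ Z₃ such that G'/Z ≅ S₄, then G' contains a subgroup mapped isomorphically onto S₄ by the quotient map; in particular G' contains a subgroup isomorphic to S₄. -/
open Subgroup Equiv.Perm
open scoped commutatorElement

lemma sq_mem_commutator_perm (s : Equiv.Perm (Fin 4)) :
    s ^ 2 ∈ commutator (Equiv.Perm (Fin 4)) := by
  have halt : alternatingGroup (Fin 4) ≤ commutator (Equiv.Perm (Fin 4)) := by
    rw [← Equiv.Perm.closure_three_cycles_eq_alternating, Subgroup.closure_le]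
    rintro σ (hσ : σ.IsThreeCycle)
    have h3 : σ ^ 3 = 1 := by
      rw [← hσ.orderOf]; exact pow_orderOf_eq_one σ
    have hconj : IsConj σ σ⁻¹ :=
      Equiv.Perm.isConj_of_cycleType_eq (by rw [Equiv.Perm.cycleType_inv])
    obtain ⟨c, hc⟩ := isConj_iff.mp hconj
    have hσeq : σ = ⁅c, σ⁆ := by
      rw [commutatorElement_def, hc, eq_comm, ← mul_inv_rev, ← sq,
        inv_eq_iff_mul_eq_one, ← pow_succ]
      exact h3
    rw [hσeq]
    exact Subgroup.commutator_mem_commutator (Subgroup.mem_top c) (Subgroup.mem_top σ)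
  apply halt
  rw [Equiv.Perm.mem_alternatingGroup, map_pow, Int.units_sq]

/-- If `G'` has a central subgroup `Z ≅ Z₃` with `G'/Z ≅ S₄`, then `G'` contains a subgroup
mapped isomorphically onto `G'/Z` by the quotient map; in particular `G'` contains a subgroup
isomorphic to `S₄`. -/
theorem stmt_9 {G' : Type*} [Group G'] (Z : Subgroup G') [Z.Normal]
    (hc : Z ≤ Subgroup.center G')
    (h3 : Nonempty (Z ≃* Multiplicative (ZMod 3)))
    (hq : Nonempty ((G' ⧸ Z) ≃* Equiv.Perm (Fin 4))) :
    ∃ K : Subgroup G',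
      Function.Bijective ((QuotientGroup.mk' Z).comp K.subtype) ∧
      Nonempty (K ≃* Equiv.Perm (Fin 4)) := by
  obtain ⟨e3⟩ := h3
  obtain ⟨eq⟩ := hq
  -- basic cardinalities
  have hcardZ : Nat.card Z = 3 := by
    rw [Nat.card_congr e3.toEquiv]; simp [Nat.card_eq_fintype_card]
  have hzpow : ∀ z ∈ Z, z ^ 3 = 1 := by
    intro z hz
    have h := pow_card_eq_one' (G := Z) (x := ⟨z, hz⟩)
    rw [hcardZ] at h
    exact congrArg Subtype.val h
  have hindex : Z.index = 24 := by
    rw [Subgroup.index, Nat.card_congr eq.toEquiv]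
    simp [Nat.card_eq_fintype_card, Fintype.card_perm]
    rfl
  have hcardG : Nat.card G' = 72 := by
    have h := Z.card_mul_index
    rw [hcardZ, hindex] at h
    omega
  haveI : Finite G' := Nat.finite_of_card_ne_zero (by rw [hcardG]; norm_num)
  -- Sylow 3-subgroup containing Z
  haveI : Fact (Nat.Prime 3) := ⟨by norm_num⟩
  have hZp : IsPGroup 3 Z := IsPGroup.of_card (n := 1) (by rw [hcardZ]; norm_num)
  obtain ⟨P, hZP⟩ := hZp.exists_le_sylow
  have hcardP : Nat.card P = 9 := by
    rw [P.card_eq_multiplicity, hcardG]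
    have h : (72 : ℕ).factorization 3 = 2 := by
      rw [Nat.factorization_def _ (by norm_num)]
      have h72 : (72 : ℕ) = 3 ^ 2 * 8 := by norm_num
      rw [h72, padicValNat.mul (by norm_num) (by norm_num), padicValNat.prime_pow,
        padicValNat.eq_zero_of_not_dvd (by decide)]
    rw [h]
    norm_num
  have hPcomm : ∀ a b : (P : Subgroup G'), a * b = b * a :=
    IsPGroup.commutative_of_card_eq_prime_sq (p := 3) (by rw [hcardP]; norm_num)
  have hPindex : (P : Subgroup G').index = 8 := by
    have h := (P : Subgroup G').card_mul_index
    rw [hcardP, hcardG] at h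
    omega
  -- transfer: Z meets the commutator subgroup trivially
  have hZD : ∀ z ∈ Z, z ∈ commutator G' → z = 1 := by
    intro z hz hzD
    set ϕ : (P : Subgroup G') →* Abelianization (P : Subgroup G') := Abelianization.of
    have hkey : ∀ (k : ℕ) (g₀ : G'), g₀⁻¹ * z ^ k * g₀ ∈ (P : Subgroup G') →
        g₀⁻¹ * z ^ k * g₀ = z ^ k := by
      intro k g₀ _
      have hcen : z ^ k ∈ Subgroup.center G' := pow_mem (hc hz) k
      rw [Subgroup.mem_center_iff.mp hcen g₀⁻¹]
      group
    have h1 : MonoidHom.transfer ϕ z = 1 :=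
      Abelianization.commutator_subset_ker (MonoidHom.transfer ϕ) hzD
    rw [MonoidHom.transfer_eq_pow ϕ z hkey] at h1
    have h2 : (⟨z ^ (P : Subgroup G').index, MonoidHom.transfer_eq_pow_aux z hkey⟩ :
        (P : Subgroup G')) ∈ commutator (P : Subgroup G') :=
      (QuotientGroup.eq_one_iff _).mp h1
    have hbot : commutator (P : Subgroup G') = ⊥ := by
      rw [_root_.commutator_def, eq_bot_iff, Subgroup.commutator_le]
      intro g _ h _
      rw [Subgroup.mem_bot, commutatorElement_def, hPcomm g h]
      group
    rw [hbot, Subgroup.mem_bot, Subtype.ext_iff] at h2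
    have h2' : z ^ (P : Subgroup G').index = 1 := h2
    have h8 : z ^ 8 = 1 := by rwa [hPindex] at h2'
    have h3' : z ^ 3 = 1 := hzpow z hz
    have h9 : z ^ 9 = 1 := by rw [(by norm_num : 9 = 3 * 3), pow_mul, h3', one_pow]
    calc z = z ^ 9 * (z ^ 8)⁻¹ := by rw [(by norm_num : 9 = 8 + 1), pow_succ]; group
    _ = 1 := by rw [h8, h9]; group
  -- the complement: kernel of squaring composed with abelianization
  set q : G' →* Abelianization G' := Abelianization.of
  set f : G' →* Abelianization G' := (powMonoidHom 2).comp q with hf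
  have hbij : Function.Bijective ((QuotientGroup.mk' Z).comp f.ker.subtype) := by
    have hinj : Function.Injective ((QuotientGroup.mk' Z).comp f.ker.subtype) := by
      intro x y hxy
      simp only [MonoidHom.comp_apply, QuotientGroup.mk'_apply, QuotientGroup.eq] at hxy
      have hz : ((x : G')⁻¹ * y : G') ∈ Z := hxy
      have hk : ((x : G')⁻¹ * y : G') ∈ f.ker := mul_mem (inv_mem x.2) y.2
      set w : G' := (x : G')⁻¹ * y
      have h2 : q w ^ 2 = 1 := by
        have := hk
        rwa [MonoidHom.mem_ker, hf, MonoidHom.comp_apply, powMonoidHom_apply] at this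
      have h3' : q w ^ 3 = 1 := by rw [← map_pow, hzpow w hz, map_one]
      have hqw : q w = 1 := by
        have hd2 := orderOf_dvd_of_pow_eq_one h2
        have hd3 := orderOf_dvd_of_pow_eq_one h3'
        have hdd : orderOf (q w) ∣ Nat.gcd 2 3 := Nat.dvd_gcd hd2 hd3
        rw [(by norm_num : Nat.gcd 2 3 = 1), Nat.dvd_one] at hdd
        exact orderOf_eq_one_iff.mp hdd
      have hw : w ∈ commutator G' := (QuotientGroup.eq_one_iff w).mp hqw
      have : w = 1 := hZD w hz hw
      have : (x : G') = y := by
        have := inv_mul_eq_one.mp this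
        exact this
      exact Subtype.ext this
    have hsurj : Function.Surjective ((QuotientGroup.mk' Z).comp f.ker.subtype) := by
      intro c
      obtain ⟨g, rfl⟩ := QuotientGroup.mk'_surjective Z c
      -- g^2 lies in Z ⊔ commutator G'
      have hmapcomm : Subgroup.map (QuotientGroup.mk' Z) (commutator G') =
          commutator (G' ⧸ Z) := by
        rw [_root_.commutator_def, Subgroup.map_commutator, _root_.commutator_def,
          Subgroup.map_top_of_surjective _ (QuotientGroup.mk'_surjective Z)]
      have hg2 : (QuotientGroup.mk' Z) (g ^ 2) ∈ commutator (G' ⧸ Z) := by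
        have h1 : eq ((QuotientGroup.mk' Z) (g ^ 2)) ∈ commutator (Equiv.Perm (Fin 4)) := by
          rw [map_pow, map_pow]
          exact sq_mem_commutator_perm _
        have h2 : commutator (Equiv.Perm (Fin 4)) =
            Subgroup.map eq.toMonoidHom (commutator (G' ⧸ Z)) := by
          rw [_root_.commutator_def (G' ⧸ Z), Subgroup.map_commutator,
            Subgroup.map_top_of_surjective _ eq.surjective, ← _root_.commutator_def]
        rw [h2] at h1
        obtain ⟨u, hu, hu2⟩ := h1
        have : u = (QuotientGroup.mk' Z) (g ^ 2) := eq.injective hu2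
        rwa [← this]
      rw [← hmapcomm] at hg2
      obtain ⟨d, hd, hd2⟩ := hg2
      -- g^2 = d * z with z ∈ Z
      have hz : d⁻¹ * g ^ 2 ∈ Z := by
        rw [← QuotientGroup.eq]
        exact hd2
      set z : G' := d⁻¹ * g ^ 2 with hzdef
      have hgz : g ^ 2 = d * z := by rw [hzdef]; group
      -- then g * z ∈ ker f and maps to mk g
      have hqz : q (g ^ 2) = q z := by
        have hqd : q d = 1 := (QuotientGroup.eq_one_iff d).mpr hd
        rw [hgz, map_mul, hqd, one_mul]
      have hk : g * z ∈ f.ker := by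
        rw [MonoidHom.mem_ker, hf, MonoidHom.comp_apply, powMonoidHom_apply]
        calc (q (g * z)) ^ 2 = q (g ^ 2) * q (z ^ 2) := by
              rw [map_mul, mul_pow, map_pow, map_pow]
        _ = q (z ^ 3) := by rw [hqz, ← map_mul, ← pow_succ']
        _ = 1 := by rw [hzpow z hz, map_one]
      refine ⟨⟨g * z, hk⟩, ?_⟩
      simp only [MonoidHom.comp_apply, QuotientGroup.mk'_apply]
      rw [QuotientGroup.eq]
      simpa using inv_mem hz
    exact ⟨hinj, hsurj⟩
  exact ⟨f.ker, hbij,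
    ⟨(MulEquiv.ofBijective ((QuotientGroup.mk' Z).comp f.ker.subtype) hbij).trans eq⟩⟩
end
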